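/- Suppose W_λ is a unilateral weighted shift in ℓ²(ℕ) with strictly positive weights that is C-symmetric with respect to a conjugation C satisfying Ce₁ = Σ_k α_k e_k with all α_k > 0. Then Σ_k α_k² = 1, Σ_k α_k² λ_k² = ∞, and for every m ∈ ℕ, Σ_{k=1}^∞ λ_k²⋯λ_{k+m−1}² α_{k+m}² = λ₁²⋯λ_m². -/

import Mathlib

open InnerProductSpace in
/-- A conjugation on a complex inner product space: an antilinear involution
satisfying `⟪Cf, Cg⟫ = ⟪g, f⟫`. -/
structure Conjugation (H : Type*) [NormedAddCommGroup H] [InnerProductSpace ℂ H] where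
  toFun : H → H
  map_add' : ∀ x y, toFun (x + y) = toFun x + toFun y
  map_smul' : ∀ (c : ℂ) (x : H), toFun (c • x) = (starRingEnd ℂ c) • toFun x
  invol : ∀ x, toFun (toFun x) = x
  inner_map : ∀ x y, (inner ℂ (toFun x) (toFun y) : ℂ) = inner ℂ y x

/-- `T` is `C`-symmetric: `T ⊆ C T* C`. -/
noncomputable def CSymmetric {H : Type*} [NormedAddCommGroup H] [InnerProductSpace ℂ H]
    [CompleteSpace H] (C : Conjugation H) (T : H →ₗ.[ℂ] H) : Prop :=
  ∀ x : T.domain, ∃ hx : C.toFun x ∈ T.adjoint.domain,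
    C.toFun (T.adjoint ⟨C.toFun x, hx⟩) = T x

/-- `T` is `C`-selfadjoint: `T = C T* C`. -/
noncomputable def CSelfAdjoint {H : Type*} [NormedAddCommGroup H] [InnerProductSpace ℂ H]
    [CompleteSpace H] (C : Conjugation H) (T : H →ₗ.[ℂ] H) : Prop :=
  CSymmetric C T ∧ ∀ y : H, C.toFun y ∈ T.adjoint.domain → y ∈ T.domain

/-- Composition of partially defined linear maps, with its natural (maximal) domain. -/
noncomputable def LinearPMap.pcomp {R E F G : Type*} [Ring R] [AddCommGroup E] [Module R E]
    [AddCommGroup F] [Module R F] [AddCommGroup G] [Module R G]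
    (g : F →ₗ.[R] G) (f : E →ₗ.[R] F) : E →ₗ.[R] G :=
  g.comp (f.domRestrict ((g.domain.comap f.toFun).map f.domain.subtype))
    (by
      rintro ⟨x, hx1, hx2⟩
      obtain ⟨y, hy, hyx⟩ := hx1
      subst hyx
      have hy' : f y ∈ g.domain := hy
      convert hy' using 1
      apply LinearPMap.domRestrict_apply
      rfl)

/-- Natural powers of a partially defined linear map, `T^(n+1) = T ∘ T^n`, with
`T^0` the identity on the whole space. -/
noncomputable def LinearPMap.ppow {R E : Type*} [Ring R] [AddCommGroup E] [Module R E]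
    (T : E →ₗ.[R] E) : ℕ → E →ₗ.[R] E
  | 0 => ⟨⊤, (⊤ : Submodule R E).subtype⟩
  | n + 1 => T.pcomp (T.ppow n)

/-- `W` is the unilateral weighted shift in `ℓ²(ℕ)` with weights `lam` (0-indexed:
`W eₙ = lam n • e_{n+1}`): it has the maximal domain
`{f : Σ |lam n * f n|² < ∞}` and acts by `(W f)(n+1) = lam n * f n`, `(W f)(0) = 0`. -/
def IsWeightedShift (lam : ℕ → ℂ) (W : lp (fun _ : ℕ => ℂ) 2 →ₗ.[ℂ] lp (fun _ : ℕ => ℂ) 2) :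
    Prop :=
  (∀ f : lp (fun _ : ℕ => ℂ) 2, f ∈ W.domain ↔ Memℓp (fun n => lam n * f n) 2) ∧
  (∀ f : W.domain, (W f : lp (fun _ : ℕ => ℂ) 2) 0 = 0 ∧
    ∀ n : ℕ, (W f : lp (fun _ : ℕ => ℂ) 2) (n + 1) = lam n * (f : lp (fun _ : ℕ => ℂ) 2) n)

/-- The canonical orthonormal basis of `ℓ²(ℕ)` (0-indexed). -/
noncomputable def e (n : ℕ) : lp (fun _ : ℕ => ℂ) 2 := lp.single 2 n 1

lemma coordInner (f : lp (fun _ : ℕ => ℂ) 2) (n : ℕ) : inner (𝕜 := ℂ) (e n) f = f n := by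
  rw [e, lp.inner_single_left]
  simp [RCLike.inner_apply]

lemma normSq (f : lp (fun _ : ℕ => ℂ) 2) : ‖f‖ ^ 2 = ∑' k, ‖f k‖ ^ 2 := by
  have h := lp.norm_rpow_eq_tsum (p := 2) (E := fun _ : ℕ => ℂ) (by norm_num) f
  have h2 : ((2:ENNReal).toReal) = ((2:ℕ):ℝ) := by norm_num
  rw [h2] at h
  simpa [Real.rpow_natCast] using h

lemma e_norm (n : ℕ) : ‖e n‖ = 1 := by
  have := lp.norm_single (p := 2) (E := fun _ : ℕ => ℂ) (by norm_num) n (1:ℂ)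
  simpa [e] using this

lemma e_self (n : ℕ) : (e n) n = 1 := lp.single_apply_self _ _ _

lemma e_ne {n k : ℕ} (h : k ≠ n) : (e n) k = 0 := lp.single_apply_ne _ _ _ h


/-- if `W_λ` is a unilateral weighted shift with strictly positive weights
which is `C`-symmetric, and `C e₁ = Σ_k α_k e_k` with all `α_k > 0` (here expressed
coordinatewise, everything 0-indexed), then `Σ α_k² = 1`, `Σ α_k² λ_k² = ∞`, and for every
`m ≥ 1`, `Σ_k λ_k² ⋯ λ_{k+m-1}² α_{k+m}² = λ₁² ⋯ λ_m²`. -/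
theorem stmt_17 (lam : ℕ → ℝ) (hpos : ∀ n, 0 < lam n)
    (W : lp (fun _ : ℕ => ℂ) 2 →ₗ.[ℂ] lp (fun _ : ℕ => ℂ) 2)
    (hW : IsWeightedShift (fun n => (lam n : ℂ)) W)
    (C : Conjugation (lp (fun _ : ℕ => ℂ) 2)) (hsym : CSymmetric C W)
    (α : ℕ → ℝ) (hα : ∀ k, 0 < α k)
    (hC1 : ∀ k : ℕ, (C.toFun (e 0)) k = (α k : ℂ)) :
    (∑' k : ℕ, (α k) ^ 2 = 1) ∧
    (¬ Summable fun k : ℕ => (α k) ^ 2 * (lam k) ^ 2) ∧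
    (∀ m : ℕ, 1 ≤ m →
      ∑' k : ℕ, (∏ j ∈ Finset.range m, (lam (k + j)) ^ 2) * (α (k + m)) ^ 2
        = ∏ j ∈ Finset.range m, (lam j) ^ 2) := by
  classical
  have hC0 : C.toFun 0 = 0 := by
    have h := C.map_add' 0 0
    rw [add_zero] at h
    exact (add_eq_right).mp h.symm
  have hCnorm : ∀ f, ‖C.toFun f‖ = ‖f‖ := by
    intro f
    have h := C.inner_map f f
    rw [inner_self_eq_norm_sq_to_K, inner_self_eq_norm_sq_to_K] at h
    have h2 : ‖C.toFun f‖ ^ 2 = ‖f‖ ^ 2 := by exact_mod_cast h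
    nlinarith [norm_nonneg (C.toFun f), norm_nonneg f]
  -- membership of basis vectors in the domain
  have he_mem : ∀ n, e n ∈ W.domain := by
    intro n
    rw [hW.1]
    have hfun : (fun k => ((lam k : ℂ)) * (e n) k) = ⇑(lp.single 2 n ((lam n : ℂ))) := by
      funext k
      by_cases hk : k = n
      · subst hk
        rw [e_self, mul_one, lp.single_apply_self]
      · rw [e_ne hk, mul_zero, lp.single_apply_ne 2 n _ hk]
    rw [hfun]
    exact lp.memℓp _
  -- action of W on basis vectors
  have hWe : ∀ n, (W ⟨e n, he_mem n⟩ : lp (fun _ : ℕ => ℂ) 2) = (lam n : ℂ) • e (n+1) := by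
    intro n
    apply lp.ext
    funext k
    match k with
    | 0 =>
      rw [(hW.2 ⟨e n, he_mem n⟩).1]
      have : (e (n+1)) 0 = 0 := e_ne (by omega)
      rw [lp.coeFn_smul]
      simp [lp.coeFn_smul, this]
    | k+1 =>
      rw [(hW.2 ⟨e n, he_mem n⟩).2 k]
      by_cases hk : k = n
      · subst hk
        rw [lp.coeFn_smul]
        simp [lp.coeFn_smul, e_self]
      · have h1 : (e n) k = 0 := e_ne hk
        have h2 : (e (n+1)) (k+1) = 0 := e_ne (by omega)
        rw [lp.coeFn_smul]
        simp [lp.coeFn_smul, h1, h2]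
  -- density of the domain
  have hdense : Dense (W.domain : Set (lp (fun _ : ℕ => ℂ) 2)) := by
    have hsp : Dense ((Submodule.span ℂ (Set.range e) : Submodule ℂ (lp (fun _ : ℕ => ℂ) 2)) :
        Set (lp (fun _ : ℕ => ℂ) 2)) := by
      rw [Submodule.dense_iff_topologicalClosure_eq_top,
        Submodule.topologicalClosure_eq_top_iff]
      rw [Submodule.eq_bot_iff]
      intro f hf
      apply lp.ext
      funext n
      have h0 := (Submodule.mem_orthogonal _ f).mp hf (e n)
        (Submodule.subset_span (Set.mem_range_self n))
      rw [coordInner] at h0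
      simpa using h0
    apply hsp.mono
    exact fun x hx => Submodule.span_le.mpr (by rintro _ ⟨n, rfl⟩; exact he_mem n) hx
  have hadj := W.adjoint_isFormalAdjoint hdense
  -- the key coordinate identity
  have key : ∀ (x : W.domain) (n : ℕ),
      (C.toFun (W x)) n = (lam n : ℂ) * (C.toFun ↑x) (n+1) := by
    intro x n
    obtain ⟨hx, heq⟩ := hsym x
    have h1 : (W.adjoint ⟨C.toFun ↑x, hx⟩ : lp (fun _ : ℕ => ℂ) 2) = C.toFun (W x) := by
      have := congrArg C.toFun heq
      rwa [C.invol] at this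
    have h2 : inner (𝕜 := ℂ) (W.adjoint ⟨C.toFun ↑x, hx⟩ : lp (fun _ : ℕ => ℂ) 2) (e n)
        = inner (𝕜 := ℂ) (C.toFun ↑x) (W ⟨e n, he_mem n⟩ : lp (fun _ : ℕ => ℂ) 2) :=
      hadj ⟨C.toFun ↑x, hx⟩ ⟨e n, he_mem n⟩
    rw [hWe n, inner_smul_right] at h2
    have h3 : inner (𝕜 := ℂ) (C.toFun ↑x) (e (n+1)) = (starRingEnd ℂ) ((C.toFun ↑x) (n+1)) := by
      rw [e, lp.inner_single_right]
      simp [RCLike.inner_apply]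
    rw [h3] at h2
    calc (C.toFun (W x)) n
        = inner (𝕜 := ℂ) (e n) (C.toFun (W x)) := (coordInner _ _).symm
      _ = inner (𝕜 := ℂ) (e n) (W.adjoint ⟨C.toFun ↑x, hx⟩ : lp (fun _ : ℕ => ℂ) 2) := by
          rw [h1]
      _ = (starRingEnd ℂ) (inner (𝕜 := ℂ)
            (W.adjoint ⟨C.toFun ↑x, hx⟩ : lp (fun _ : ℕ => ℂ) 2) (e n)) :=
          (inner_conj_symm _ _).symm
      _ = (lam n : ℂ) * (C.toFun ↑x) (n+1) := by
          rw [h2]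
          simp [map_mul, Complex.conj_ofReal]
  -- coordinates of C applied to the images of e 0 under powers of W
  have hCoordX : ∀ (m n : ℕ),
      (C.toFun (((∏ i ∈ Finset.range m, lam i : ℝ) : ℂ) • e m)) n
        = (((∏ i ∈ Finset.range m, lam (n + i)) * α (n + m) : ℝ) : ℂ) := by
    intro m
    induction m with
    | zero =>
      intro n
      simpa using hC1 n
    | succ j ih =>
      intro n
      have hmem : ((∏ i ∈ Finset.range j, lam i : ℝ) : ℂ) • e j ∈ W.domain :=
        W.domain.smul_mem _ (he_mem j)
      have hxeq : (⟨((∏ i ∈ Finset.range j, lam i : ℝ) : ℂ) • e j, hmem⟩ : W.domain)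
          = ((∏ i ∈ Finset.range j, lam i : ℝ) : ℂ) • ⟨e j, he_mem j⟩ := rfl
      have hWx : (W ⟨((∏ i ∈ Finset.range j, lam i : ℝ) : ℂ) • e j, hmem⟩ :
          lp (fun _ : ℕ => ℂ) 2)
          = ((∏ i ∈ Finset.range (j+1), lam i : ℝ) : ℂ) • e (j+1) := by
        rw [hxeq, W.map_smul, hWe j, smul_smul, Finset.prod_range_succ]
        push_cast
        ring_nf
      have hk := key ⟨((∏ i ∈ Finset.range j, lam i : ℝ) : ℂ) • e j, hmem⟩ n
      rw [hWx] at hk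
      rw [hk]
      have hcoe : (C.toFun ↑(⟨((∏ i ∈ Finset.range j, lam i : ℝ) : ℂ) • e j, hmem⟩ : W.domain))
          = C.toFun (((∏ i ∈ Finset.range j, lam i : ℝ) : ℂ) • e j) := rfl
      rw [hcoe, ih (n+1)]
      have hprod : ∏ i ∈ Finset.range j, lam ((n+1) + i) = ∏ i ∈ Finset.range j, lam (n + (i+1)) := by
        apply Finset.prod_congr rfl
        intro i _
        congr 1
        omega
      have hidx : (n+1) + j = n + (j+1) := by omega
      rw [hprod, hidx, Finset.prod_range_succ']
      push_cast
      simp only [Nat.add_zero]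
      ring
  refine ⟨?_, ?_, ?_⟩
  · -- part 1
    have h0 : ‖C.toFun (e 0)‖ = 1 := by rw [hCnorm, e_norm]
    calc ∑' k, (α k) ^ 2 = ∑' k, ‖(C.toFun (e 0)) k‖ ^ 2 := by
          congr 1
          funext k
          rw [hC1 k, Complex.norm_real, Real.norm_eq_abs, sq_abs]
      _ = ‖C.toFun (e 0)‖ ^ 2 := (normSq _).symm
      _ = 1 := by rw [h0]; norm_num
  · -- part 2
    intro hsum
    have hmem : C.toFun (e 0) ∈ W.domain := by
      rw [hW.1]
      apply memℓp_gen
      have h2 : ((2:ENNReal).toReal) = ((2:ℕ):ℝ) := by norm_num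
      rw [h2]
      apply hsum.congr
      intro n
      rw [hC1 n]
      rw [Real.rpow_natCast]
      push_cast
      rw [← Complex.ofReal_mul, Complex.norm_real, Real.norm_eq_abs, sq_abs]
      ring
    have hCW : ∀ n, (C.toFun (W ⟨C.toFun (e 0), hmem⟩)) n = 0 := by
      intro n
      rw [key ⟨C.toFun (e 0), hmem⟩ n]
      have : (C.toFun ↑(⟨C.toFun (e 0), hmem⟩ : W.domain)) = e 0 := C.invol (e 0)
      rw [this, e_ne (by omega : n + 1 ≠ 0), mul_zero]
    have hz : C.toFun (W ⟨C.toFun (e 0), hmem⟩) = 0 := by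
      apply lp.ext
      funext n
      simpa using hCW n
    have hWz : (W ⟨C.toFun (e 0), hmem⟩ : lp (fun _ : ℕ => ℂ) 2) = 0 := by
      have := congrArg C.toFun hz
      rwa [C.invol, hC0] at this
    have h1 := (hW.2 ⟨C.toFun (e 0), hmem⟩).2 0
    rw [hWz] at h1
    have h2 : ((⟨C.toFun (e 0), hmem⟩ : W.domain) : lp (fun _ : ℕ => ℂ) 2) 0 = (α 0 : ℂ) := hC1 0
    rw [h2] at h1
    simp only [lp.coeFn_zero, Pi.zero_apply] at h1
    have : (lam 0 : ℂ) * (α 0 : ℂ) ≠ 0 := by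
      apply mul_ne_zero <;> simp [Complex.ofReal_ne_zero, (hpos 0).ne', (hα 0).ne']
    exact this h1.symm
  · -- part 3
    intro m _
    have hcpos : 0 < ∏ i ∈ Finset.range m, lam i := Finset.prod_pos fun i _ => hpos i
    have hxnorm : ‖(((∏ i ∈ Finset.range m, lam i : ℝ)) : ℂ) • e m‖
        = ∏ i ∈ Finset.range m, lam i := by
      rw [norm_smul, e_norm, mul_one, Complex.norm_real, Real.norm_eq_abs, abs_of_pos hcpos]
    calc ∑' k, (∏ j ∈ Finset.range m, (lam (k + j)) ^ 2) * (α (k + m)) ^ 2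
        = ∑' k, ‖(C.toFun (((∏ i ∈ Finset.range m, lam i : ℝ) : ℂ) • e m)) k‖ ^ 2 := by
          congr 1
          funext k
          rw [hCoordX m k, Complex.norm_real, Real.norm_eq_abs, sq_abs, mul_pow, ← Finset.prod_pow]
      _ = ‖C.toFun (((∏ i ∈ Finset.range m, lam i : ℝ) : ℂ) • e m)‖ ^ 2 := (normSq _).symm
      _ = ∏ j ∈ Finset.range m, (lam j) ^ 2 := by
          rw [hCnorm, hxnorm, ← Finset.prod_pow]
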